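/- Let n ≥ 1, let t₁, …, tₙ ∈ ℂ be pairwise distinct, and let k ≥ 0. Then Σ_{i=1}^n tᵢ^{n−1+k}/∏_{j≠i}(tᵢ − tⱼ) = h_k(t₁, …, tₙ), the complete homogeneous symmetric polynomial of degree k evaluated at t₁, …, tₙ. -/

import Mathlib

open Finset

/-- The complete homogeneous symmetric polynomial of degree `k` in `n` variables, evaluated
at `t`: the sum of all monomials of total degree `k`. -/
noncomputable def completeHomogeneous (n k : ℕ) (t : Fin n → ℂ) : ℂ :=
  ∑ c ∈ Finset.Nat.antidiagonalTuple n k, ∏ i : Fin n, t i ^ c i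

lemma ch_succ (n k : ℕ) (t : Fin (n + 1) → ℂ) :
    completeHomogeneous (n + 1) k t
      = ∑ p ∈ Finset.HasAntidiagonal.antidiagonal k,
          t 0 ^ p.1 * completeHomogeneous n p.2 (t ∘ Fin.succ) := by
  unfold completeHomogeneous
  simp_rw [Finset.mul_sum]
  rw [Finset.sum_sigma']
  refine Finset.sum_nbij' (fun c => ⟨(c 0, ∑ i : Fin n, c (Fin.succ i)), Fin.tail c⟩)
      (fun pc => Fin.cons pc.1.1 pc.2) ?_ ?_ ?_ ?_ ?_
  · intro c hc
    rw [Finset.Nat.mem_antidiagonalTuple] at hc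
    simp only [Finset.mem_sigma, Finset.HasAntidiagonal.mem_antidiagonal, Finset.Nat.mem_antidiagonalTuple]
    refine ⟨?_, rfl⟩
    rw [← hc, Fin.sum_univ_succ]
  · rintro ⟨p, c⟩ hpc
    simp only [Finset.mem_sigma, Finset.HasAntidiagonal.mem_antidiagonal,
      Finset.Nat.mem_antidiagonalTuple] at hpc ⊢
    rw [Fin.sum_cons, hpc.2, hpc.1]
  · intro c hc
    simp [Fin.cons_self_tail]
  · rintro ⟨p, c⟩ hpc
    simp only [Finset.mem_sigma, Finset.HasAntidiagonal.mem_antidiagonal,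
      Finset.Nat.mem_antidiagonalTuple] at hpc
    simp only [Fin.cons_zero, Fin.cons_succ, Fin.tail_cons]
    congr 1
    exact Prod.ext rfl hpc.2
  · intro c hc
    rw [Fin.prod_univ_succ]
    simp [Fin.tail]

lemma prod_compl_zero {n : ℕ} (g : Fin (n + 1) → ℂ) :
    ∏ j ∈ ({(0 : Fin (n + 1))}ᶜ : Finset (Fin (n + 1))), g j = ∏ j : Fin n, g j.succ := by
  have h : ({(0 : Fin (n + 1))}ᶜ : Finset (Fin (n + 1)))
      = Finset.univ.map ⟨Fin.succ, Fin.succ_injective n⟩ := by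
    ext x
    simp [Fin.exists_succ_eq]
  rw [h, Finset.prod_map]
  rfl

lemma prod_compl_succ {n : ℕ} (g : Fin (n + 1) → ℂ) (i : Fin n) :
    ∏ j ∈ ({i.succ}ᶜ : Finset (Fin (n + 1))), g j
      = g 0 * ∏ j ∈ ({i}ᶜ : Finset (Fin n)), g j.succ := by
  have h0 : (0 : Fin (n + 1)) ∉ (({i}ᶜ : Finset (Fin n))).map ⟨Fin.succ, Fin.succ_injective n⟩ := by
    simp [(Fin.succ_ne_zero _).symm, fun j : Fin n => (Fin.succ_ne_zero j)]
  have h : ({i.succ}ᶜ : Finset (Fin (n + 1)))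
      = insert 0 ((({i}ᶜ : Finset (Fin n))).map ⟨Fin.succ, Fin.succ_injective n⟩) := by
    ext x
    simp only [Finset.mem_compl, Finset.mem_singleton, Finset.mem_insert, Finset.mem_map,
      Function.Embedding.coeFn_mk]
    constructor
    · intro hx
      rcases Fin.eq_zero_or_eq_succ x with rfl | ⟨y, rfl⟩
      · exact Or.inl rfl
      · exact Or.inr ⟨y, by simpa [Fin.succ_inj] using hx, rfl⟩
    · rintro (rfl | ⟨y, hy, rfl⟩)
      · exact (Fin.succ_ne_zero i).symm
      · simpa [Fin.succ_inj] using hy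
  rw [h, Finset.prod_insert h0, Finset.prod_map]
  rfl

lemma partial_fractions {n : ℕ} (hn : 0 < n) (s : Fin n → ℂ) (hs : Function.Injective s)
    (a : ℂ) (ha : ∀ i, a ≠ s i) :
    ∑ i : Fin n, 1 / ((s i - a) * ∏ j ∈ ({i}ᶜ : Finset (Fin n)), (s i - s j))
      = -(1 / ∏ j : Fin n, (a - s j)) := by
  have hB := Lagrange.sum_basis (s := (Finset.univ : Finset (Fin n))) (v := s)
    (Set.injOn_of_injective hs) ⟨⟨0, hn⟩, Finset.mem_univ _⟩
  have hEv : ∑ i : Fin n, ∏ j ∈ Finset.univ.erase i, ((s i - s j)⁻¹ * (a - s j)) = 1 := by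
    have := congrArg (Polynomial.eval a) hB
    simpa [Lagrange.basis, Lagrange.basisDivisor, Polynomial.eval_finset_sum,
      Polynomial.eval_prod] using this
  have hQ : ∏ j : Fin n, (a - s j) ≠ 0 :=
    Finset.prod_ne_zero_iff.mpr fun j _ => sub_ne_zero.mpr (ha j)
  have step : ∀ i : Fin n,
      1 / ((s i - a) * ∏ j ∈ ({i}ᶜ : Finset (Fin n)), (s i - s j))
        = -(1 / ∏ j : Fin n, (a - s j))
            * ∏ j ∈ Finset.univ.erase i, ((s i - s j)⁻¹ * (a - s j)) := by
    intro i
    have hP : ∏ j ∈ Finset.univ.erase i, (s i - s j) ≠ 0 :=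
      Finset.prod_ne_zero_iff.mpr fun j hj =>
        sub_ne_zero.mpr (fun h => (Finset.mem_erase.mp hj).1 (hs h).symm)
    have hQi : ∏ j ∈ Finset.univ.erase i, (a - s j) ≠ 0 :=
      Finset.prod_ne_zero_iff.mpr fun j _ => sub_ne_zero.mpr (ha j)
    have hA : s i - a ≠ 0 := sub_ne_zero.mpr fun h => ha i h.symm
    have hsplit : ∏ j : Fin n, (a - s j) = (a - s i) * ∏ j ∈ Finset.univ.erase i, (a - s j) :=
      (Finset.mul_prod_erase _ _ (Finset.mem_univ i)).symm
    rw [Finset.compl_singleton, Finset.prod_mul_distrib, Finset.prod_inv_distrib, hsplit]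
    have hA' : a - s i ≠ 0 := sub_ne_zero.mpr (ha i)
    field_simp
    ring
  rw [Finset.sum_congr rfl fun i _ => step i, ← Finset.mul_sum, hEv, mul_one]

lemma master : ∀ n : ℕ, 0 < n → ∀ (t : Fin n → ℂ), Function.Injective t → ∀ m : ℕ,
    ∑ i : Fin n, t i ^ m / ∏ j ∈ ({i}ᶜ : Finset (Fin n)), (t i - t j)
      = if n - 1 ≤ m then completeHomogeneous n (m - (n - 1)) t else 0 := by
  intro n
  induction n with
  | zero => intro h; omega
  | succ n ih =>
    intro _ t ht m
    rcases Nat.eq_zero_or_pos n with rfl | hn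
    · have hc : ∀ i : Fin 1, ({i}ᶜ : Finset (Fin 1)) = ∅ := by decide
      simp [hc, completeHomogeneous]
    · set s : Fin n → ℂ := t ∘ Fin.succ with hs_def
      set a : ℂ := t 0 with ha_def
      have hsinj : Function.Injective s := fun i j h => Fin.succ_injective n (ht h)
      have ha : ∀ i, a ≠ s i := fun i h => Fin.succ_ne_zero i (ht h).symm
      rw [Fin.sum_univ_succ]
      have h0 : ∏ j ∈ ({(0 : Fin (n + 1))}ᶜ : Finset (Fin (n + 1))), (t 0 - t j)
          = ∏ j : Fin n, (a - s j) := prod_compl_zero _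
      have hterm : ∀ i : Fin n,
          t i.succ ^ m / ∏ j ∈ ({i.succ}ᶜ : Finset (Fin (n + 1))), (t i.succ - t j)
            = (∑ j ∈ Finset.range m,
                a ^ (m - 1 - j) * (s i ^ j / ∏ j' ∈ ({i}ᶜ : Finset (Fin n)), (s i - s j')))
              + a ^ m * (1 / ((s i - a) * ∏ j' ∈ ({i}ᶜ : Finset (Fin n)), (s i - s j'))) := by
        intro i
        rw [prod_compl_succ (fun j => t i.succ - t j) i]
        have hA : s i - a ≠ 0 := sub_ne_zero.mpr fun h => ha i h.symm
        have hgeom : s i ^ m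
            = (∑ j ∈ Finset.range m, s i ^ j * a ^ (m - 1 - j)) * (s i - a) + a ^ m := by
          rw [geom_sum₂_mul]; ring
        show s i ^ m / ((s i - a) * ∏ j' ∈ ({i}ᶜ : Finset (Fin n)), (s i - s j')) = _
        rw [hgeom, add_div]
        congr 1
        · rw [mul_comm (s i - a), mul_div_mul_right _ _ hA, Finset.sum_div]
          exact Finset.sum_congr rfl fun j _ => by ring
        · exact (mul_one_div _ _).symm
      rw [Finset.sum_congr rfl fun i _ => hterm i, Finset.sum_add_distrib, ← Finset.mul_sum,
        partial_fractions hn s hsinj a ha, h0]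
      have hswap : ∑ i : Fin n, ∑ j ∈ Finset.range m,
            a ^ (m - 1 - j) * (s i ^ j / ∏ j' ∈ ({i}ᶜ : Finset (Fin n)), (s i - s j'))
          = ∑ j ∈ Finset.range m, a ^ (m - 1 - j)
              * (if n - 1 ≤ j then completeHomogeneous n (j - (n - 1)) s else 0) := by
        rw [Finset.sum_comm]
        refine Finset.sum_congr rfl fun j _ => ?_
        rw [← Finset.mul_sum, ih hn s hsinj j]
      rw [hswap]
      have hcancel : ∀ X : ℂ, a ^ m / ∏ j : Fin n, (a - s j)
          + (X + a ^ m * -(1 / ∏ j : Fin n, (a - s j))) = X := fun X => by ring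
      rw [hcancel]
      by_cases hm : n ≤ m
      · obtain ⟨K, rfl⟩ := Nat.exists_eq_add_of_le hm
        rw [if_pos (by omega)]
        have hK : n + K - (n + 1 - 1) = K := by omega
        rw [hK, ch_succ n K t, Finset.Nat.sum_antidiagonal_eq_sum_range_succ_mk]
        rw [← Finset.sum_range_reflect (fun p => a ^ p
            * completeHomogeneous n (K - p) (t ∘ Fin.succ)) (K + 1)]
        have hr : n + K = (n - 1) + (K + 1) := by omega
        rw [hr, Finset.sum_range_add]
        rw [Finset.sum_eq_zero fun j hj => by
          rw [if_neg (by have := Finset.mem_range.mp hj; omega), mul_zero], zero_add]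
        refine Finset.sum_congr rfl fun j hj => ?_
        have hjK : j < K + 1 := Finset.mem_range.mp hj
        rw [if_pos (by omega)]
        have e1 : (n - 1) + (K + 1) - 1 - ((n - 1) + j) = K - j := by omega
        have e2 : (n - 1) + j - (n - 1) = j := by omega
        have e3 : K - (K + 1 - 1 - j) = j := by omega
        have e4 : K + 1 - 1 - j = K - j := by omega
        rw [e1, e2, e3, e4]
      · rw [if_neg (by omega)]
        exact Finset.sum_eq_zero fun j hj => by
          rw [if_neg (by have := Finset.mem_range.mp hj; omega), mul_zero]

/-- For pairwise distinct `t₁, …, tₙ`, `Σᵢ tᵢ^{n-1+k} / ∏_{j≠i}(tᵢ - tⱼ) = h_k(t₁,…,tₙ)`,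
the complete homogeneous symmetric polynomial of degree `k`. -/
theorem power_sum_eq_complete_homogeneous (n : ℕ) (hn : 1 ≤ n) (k : ℕ) (t : Fin n → ℂ)
    (ht : Function.Injective t) :
    ∑ i : Fin n, t i ^ (n - 1 + k) / ∏ j ∈ ({i}ᶜ : Finset (Fin n)), (t i - t j) =
      completeHomogeneous n k t := by
  rw [master n hn t ht (n - 1 + k), if_pos (Nat.le_add_right _ _), Nat.add_sub_cancel_left]
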